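/- Let p ≥ 3 be an integer and ν > 0. Suppose a sequence (Δ_k)_{k≥1} of positive reals satisfies Δ₁ ≤ ν/(p+1) and Δ_k − Δ_{k+1} ≥ C·Δ_k^{(p+1)/p} for all k ≥ 1, where C = (p/(p+1))·ν^{−1/p}. Then for all k ≥ 1, Δ_k ≤ ν·((p+1)^{1/p} + (k−1)/(p+1))^{−p}, and hence Δ_k ≤ ν·((p+1)/k)^p. -/
import Mathlib

private lemma scr_sum_le (n : ℕ) (s t : ℝ) (hs : 0 ≤ s) (hst : s ≤ t) :
    (∑ i ∈ Finset.range (n + 1), t ^ i * s ^ (n - i)) ≤ ((n : ℝ) + 1) * t ^ n := by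
  have ht : 0 ≤ t := hs.trans hst
  have h : ∀ i ∈ Finset.range (n + 1), t ^ i * s ^ (n - i) ≤ t ^ n := by
    intro i hi
    rw [Finset.mem_range] at hi
    calc t ^ i * s ^ (n - i) ≤ t ^ i * t ^ (n - i) :=
          mul_le_mul_of_nonneg_left (pow_le_pow_left₀ hs hst _) (pow_nonneg ht _)
      _ = t ^ n := by rw [← pow_add]; congr 1; omega
  calc (∑ i ∈ Finset.range (n + 1), t ^ i * s ^ (n - i))
      ≤ ∑ _i ∈ Finset.range (n + 1), t ^ n := Finset.sum_le_sum h
    _ = ((n : ℝ) + 1) * t ^ n := by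
        rw [Finset.sum_const, Finset.card_range, nsmul_eq_mul]; push_cast; ring

private lemma scr_le_sum (n : ℕ) (s t : ℝ) (hs : 0 ≤ s) (hst : s ≤ t) :
    ((n : ℝ) + 1) * s ^ n ≤ ∑ i ∈ Finset.range (n + 1), t ^ i * s ^ (n - i) := by
  have h : ∀ i ∈ Finset.range (n + 1), s ^ n ≤ t ^ i * s ^ (n - i) := by
    intro i hi
    rw [Finset.mem_range] at hi
    calc s ^ n = s ^ i * s ^ (n - i) := by rw [← pow_add]; congr 1; omega
      _ ≤ t ^ i * s ^ (n - i) :=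
          mul_le_mul_of_nonneg_right (pow_le_pow_left₀ hs hst _) (pow_nonneg hs _)
  calc ((n : ℝ) + 1) * s ^ n
      = ∑ _i ∈ Finset.range (n + 1), s ^ n := by
        rw [Finset.sum_const, Finset.card_range, nsmul_eq_mul]; push_cast; ring
    _ ≤ _ := Finset.sum_le_sum h

private lemma scr_sum_split (n : ℕ) (s t : ℝ) :
    (∑ i ∈ Finset.range (n + 2), t ^ i * s ^ (n + 1 - i))
      = t * (∑ i ∈ Finset.range (n + 1), t ^ i * s ^ (n - i)) + s ^ (n + 1) := by
  rw [Finset.sum_range_succ' (fun i => t ^ i * s ^ (n + 1 - i)) (n + 1), Finset.mul_sum]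
  simp only [pow_zero, one_mul, Nat.sub_zero, Nat.succ_sub_succ]
  congr 1
  exact Finset.sum_congr rfl fun i _ => by rw [pow_succ]; ring

private lemma scr_keyM (n : ℕ) (hn : 1 ≤ n) (s t m : ℝ) (hs : 0 ≤ s) (hst : s ≤ t)
    (htm : t ≤ m) :
    (n : ℝ) * (t ^ (n + 1) - s ^ (n + 1)) ≤ ((n : ℝ) + 1) * m * (t ^ n - s ^ n) := by
  obtain ⟨j, rfl⟩ : ∃ j, n = j + 1 := ⟨n - 1, by omega⟩
  have ht : 0 ≤ t := hs.trans hst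
  have hsm : s ≤ m := hst.trans htm
  have hm0 : 0 ≤ m := hs.trans hsm
  have hts : 0 ≤ t - s := sub_nonneg.mpr hst
  have hS0 : 0 ≤ ∑ i ∈ Finset.range (j + 1), t ^ i * s ^ (j - i) :=
    Finset.sum_nonneg fun i _ => mul_nonneg (pow_nonneg ht _) (pow_nonneg hs _)
  have e1 := geom_sum₂_mul t s (j + 1)
  have e2 := geom_sum₂_mul t s (j + 2)
  have r1 : ∀ i, j + 1 - 1 - i = j - i := fun i => by omega
  have r2 : ∀ i, j + 2 - 1 - i = j + 1 - i := fun i => by omega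
  simp only [r1] at e1
  simp only [r2] at e2
  set S0 := ∑ i ∈ Finset.range (j + 1), t ^ i * s ^ (j - i) with hS0def
  set S1 := ∑ i ∈ Finset.range (j + 2), t ^ i * s ^ (j + 1 - i) with hS1def
  have hsplit : S1 = t * S0 + s ^ (j + 1) := scr_sum_split j s t
  have hle : ((j : ℝ) + 1) * s ^ j ≤ S0 := scr_le_sum j s t hs hst
  have hA : ((j : ℝ) + 1) * s ^ (j + 1) ≤ m * S0 := by
    calc ((j : ℝ) + 1) * s ^ (j + 1) = s * (((j : ℝ) + 1) * s ^ j) := by rw [pow_succ]; ring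
      _ ≤ m * (((j : ℝ) + 1) * s ^ j) :=
          mul_le_mul_of_nonneg_right hsm (mul_nonneg (by positivity) (pow_nonneg hs _))
      _ ≤ m * S0 := mul_le_mul_of_nonneg_left hle hm0
  have htS0 : t * S0 ≤ m * S0 := mul_le_mul_of_nonneg_right htm hS0
  have hmul1 : ((j : ℝ) + 1) * (t * S0) ≤ ((j : ℝ) + 1) * (m * S0) :=
    mul_le_mul_of_nonneg_left htS0 (by positivity)
  have hmain : ((j : ℝ) + 1) * (t * S0 + s ^ (j + 1)) ≤ ((j : ℝ) + 2) * m * S0 := by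
    nlinarith [hA, hmul1]
  have hfin := mul_le_mul_of_nonneg_right hmain hts
  push_cast
  calc ((j : ℝ) + 1) * (t ^ (j + 1 + 1) - s ^ (j + 1 + 1))
      = ((j : ℝ) + 1) * (S1 * (t - s)) := by rw [e2]
    _ = (((j : ℝ) + 1) * (t * S0 + s ^ (j + 1))) * (t - s) := by rw [hsplit]; ring
    _ ≤ (((j : ℝ) + 2) * m * S0) * (t - s) := hfin
    _ = ((j : ℝ) + 1 + 1) * m * (S0 * (t - s)) := by ring
    _ = ((j : ℝ) + 1 + 1) * m * (t ^ (j + 1) - s ^ (j + 1)) := by rw [e1]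

private lemma scr_keyB (n : ℕ) (b b' : ℝ) (hb : 0 ≤ b) (hbb : b ≤ b') :
    b * (b' ^ (n + 1) - b ^ (n + 1)) ≤ ((n : ℝ) + 1) * (b' - b) * b' ^ (n + 1) := by
  have hb' : 0 ≤ b' := hb.trans hbb
  have hd : 0 ≤ b' - b := sub_nonneg.mpr hbb
  have e1 := geom_sum₂_mul b' b (n + 1)
  have r1 : ∀ i, n + 1 - 1 - i = n - i := fun i => by omega
  simp only [r1] at e1
  set S := ∑ i ∈ Finset.range (n + 1), b' ^ i * b ^ (n - i) with hSdef
  have hSn : 0 ≤ S :=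
    Finset.sum_nonneg fun i _ => mul_nonneg (pow_nonneg hb' _) (pow_nonneg hb _)
  have hS : S ≤ ((n : ℝ) + 1) * b' ^ n := scr_sum_le n b b' hb hbb
  have h1 : b * S ≤ ((n : ℝ) + 1) * b' ^ (n + 1) := by
    calc b * S ≤ b' * (((n : ℝ) + 1) * b' ^ n) :=
          mul_le_mul hbb hS hSn hb'
      _ = ((n : ℝ) + 1) * b' ^ (n + 1) := by rw [pow_succ]; ring
  calc b * (b' ^ (n + 1) - b ^ (n + 1)) = (b * S) * (b' - b) := by rw [← e1]; ring
    _ ≤ (((n : ℝ) + 1) * b' ^ (n + 1)) * (b' - b) := mul_le_mul_of_nonneg_right h1 hd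
    _ = ((n : ℝ) + 1) * (b' - b) * b' ^ (n + 1) := by ring

private lemma scr_root_pow (x : ℝ) (hx : 0 ≤ x) (n : ℕ) (hn : n ≠ 0) :
    (x ^ ((1 : ℝ) / n)) ^ n = x := by
  rw [← Real.rpow_natCast (x ^ ((1 : ℝ) / n)) n, ← Real.rpow_mul hx]
  rw [one_div, inv_mul_cancel₀ (by exact_mod_cast hn : (n : ℝ) ≠ 0), Real.rpow_one]

private lemma scr_root_pow_succ (x : ℝ) (hx : 0 ≤ x) (n : ℕ) (hn : n ≠ 0) :
    (x ^ ((1 : ℝ) / n)) ^ (n + 1) = x ^ (((n : ℝ) + 1) / n) := by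
  have hn' : (n : ℝ) ≠ 0 := by exact_mod_cast hn
  rw [← Real.rpow_natCast (x ^ ((1 : ℝ) / n)) (n + 1), ← Real.rpow_mul hx]
  congr 1
  push_cast
  field_simp

set_option maxHeartbeats 1000000 in
theorem strongly_convex_rate (p : ℕ) (hp : 3 ≤ p) (ν : ℝ) (hν : 0 < ν)
    (Δ : ℕ → ℝ) (hpos : ∀ k ≥ 1, 0 < Δ k) (h1 : Δ 1 ≤ ν / ((p : ℝ) + 1))
    (hrec : ∀ k ≥ 1, Δ k - Δ (k + 1)
      ≥ ((p : ℝ) / ((p : ℝ) + 1)) * ν ^ (-(1 : ℝ) / p) * Δ k ^ (((p : ℝ) + 1) / p)) :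
    ∀ k ≥ 1,
      Δ k ≤ ν * (((p : ℝ) + 1) ^ ((1 : ℝ) / p) + ((k : ℝ) - 1) / ((p : ℝ) + 1)) ^ (-(p : ℝ)) ∧
      Δ k ≤ ν * (((p : ℝ) + 1) / (k : ℝ)) ^ (p : ℕ) := by
  have hP : (3 : ℝ) ≤ (p : ℝ) := by exact_mod_cast hp
  have hP1 : (0 : ℝ) < (p : ℝ) + 1 := by linarith
  have hpne : p ≠ 0 := by omega
  have hroot1 : (1 : ℝ) ≤ ((p : ℝ) + 1) ^ ((1 : ℝ) / (p : ℝ)) :=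
    Real.one_le_rpow (by linarith) (by positivity)
  have hBge1 : ∀ k : ℕ, 1 ≤ k →
      (1 : ℝ) ≤ ((p : ℝ) + 1) ^ ((1 : ℝ) / (p : ℝ)) + ((k : ℝ) - 1) / ((p : ℝ) + 1) := by
    intro k hk
    have hk' : (1 : ℝ) ≤ (k : ℝ) := by exact_mod_cast hk
    have : (0 : ℝ) ≤ ((k : ℝ) - 1) / ((p : ℝ) + 1) := div_nonneg (by linarith) hP1.le
    linarith
  set m := ν ^ ((1 : ℝ) / (p : ℝ)) with hmdef
  clear_value m
  have hmpos : 0 < m := by rw [hmdef]; exact Real.rpow_pos_of_pos hν _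
  have hmp : m ^ p = ν := by rw [hmdef]; exact scr_root_pow ν hν.le p hpne
  have claim : ∀ k, 1 ≤ k →
      Δ k ≤ ν / (((p : ℝ) + 1) ^ ((1 : ℝ) / (p : ℝ)) + ((k : ℝ) - 1) / ((p : ℝ) + 1)) ^ p := by
    intro k hk
    induction k with
    | zero => omega
    | succ k ih =>
      rcases Nat.lt_or_ge k 1 with hk0 | hk1
      · have : k = 0 := by omega
        subst this
        have hB1 : (((p : ℝ) + 1) ^ ((1 : ℝ) / (p : ℝ)) + (((1:ℕ) : ℝ) - 1) / ((p : ℝ) + 1)) ^ p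
            = (p : ℝ) + 1 := by
          rw [show ((((1:ℕ) : ℝ)) - 1) / ((p : ℝ) + 1) = 0 by norm_num, add_zero]
          exact scr_root_pow _ (by linarith) p hpne
        rw [hB1]
        exact h1
      · have ihk := ih hk1
        set B := ((p : ℝ) + 1) ^ ((1 : ℝ) / (p : ℝ)) + ((k : ℝ) - 1) / ((p : ℝ) + 1) with hBdef
        clear_value B
        have hBk1 : 1 ≤ B := hBdef ▸ hBge1 k hk1
        have hBkpos : 0 < B := by linarith
        set b' := B + 1 / ((p : ℝ) + 1) with hb'def
        clear_value b'
        have hBsucc : ((p : ℝ) + 1) ^ ((1 : ℝ) / (p : ℝ)) + ((((k+1 : ℕ)) : ℝ) - 1) / ((p : ℝ) + 1)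
            = b' := by rw [hb'def, hBdef]; push_cast; ring
        rw [hBsucc]
        have hbb' : B ≤ b' := by
          have : (0 : ℝ) < 1 / ((p : ℝ) + 1) := by positivity
          rw [hb'def]; linarith
        have hb'pos : 0 < b' := lt_of_lt_of_le hBkpos hbb'
        have hΔpos := hpos k hk1
        set a := (Δ k) ^ ((1 : ℝ) / (p : ℝ)) with hadef
        clear_value a
        have hapos : 0 < a := by rw [hadef]; exact Real.rpow_pos_of_pos hΔpos _
        have hap : a ^ p = Δ k := by rw [hadef]; exact scr_root_pow _ hΔpos.le p hpne
        have hap1 : a ^ (p + 1) = Δ k ^ (((p : ℝ) + 1) / (p : ℝ)) := by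
          rw [hadef]; exact scr_root_pow_succ _ hΔpos.le p hpne
        set t := m / B with htdef
        clear_value t
        have htpos : 0 < t := by rw [htdef]; exact div_pos hmpos hBkpos
        have htm : t ≤ m := by rw [htdef]; exact div_le_self hmpos.le hBk1
        have htp : t ^ p = ν / B ^ p := by rw [htdef, div_pow, hmp]
        have hat : a ≤ t := by
          refine le_of_pow_le_pow_left₀ hpne htpos.le ?_
          rw [hap, htp]
          exact ihk
        have hν' : ν ^ (-(1 : ℝ) / (p : ℝ)) = m⁻¹ := by
          rw [show (-(1 : ℝ) / (p : ℝ)) = -((1 : ℝ) / (p : ℝ)) by ring, Real.rpow_neg hν.le,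
            hmdef]
        have hrk := hrec k hk1
        rw [hν', ← hap1] at hrk
        have hstep1 : Δ (k + 1) ≤ a ^ p - (p : ℝ) / (((p : ℝ) + 1) * m) * a ^ (p + 1) := by
          have he : (p : ℝ) / (((p : ℝ) + 1) * m) * a ^ (p + 1)
              = (p : ℝ) / ((p : ℝ) + 1) * m⁻¹ * a ^ (p + 1) := by
            field_simp
          rw [he, hap]
          linarith [hrk]
        have hstep2 : a ^ p - (p : ℝ) / (((p : ℝ) + 1) * m) * a ^ (p + 1)
            ≤ t ^ p - (p : ℝ) / (((p : ℝ) + 1) * m) * t ^ (p + 1) := by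
          have hk2 := scr_keyM p (by omega) a t m hapos.le hat htm
          have h5 : (p : ℝ) / (((p : ℝ) + 1) * m) * (t ^ (p + 1) - a ^ (p + 1))
              ≤ t ^ p - a ^ p := by
            rw [div_mul_eq_mul_div, div_le_iff₀ (by positivity)]
            nlinarith [hk2]
          linarith
        have hstep3 : t ^ p - (p : ℝ) / (((p : ℝ) + 1) * m) * t ^ (p + 1) ≤ ν / b' ^ p := by
          have hkB := scr_keyB (p - 1) B b' hBkpos.le hbb'
          have hps : p - 1 + 1 = p := by omega
          rw [hps] at hkB
          have hcast : ((p - 1 : ℕ) : ℝ) + 1 = (p : ℝ) := by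
            have : ((p - 1 : ℕ) : ℝ) = (p : ℝ) - 1 := by
              push_cast [Nat.cast_sub (by omega : 1 ≤ p)]; ring
            rw [this]; ring
          rw [hcast] at hkB
          -- hkB : B * (b'^p - B^p) ≤ p * (b' - B) * b'^p
          have hpoly : (((p : ℝ) + 1) * B - (p : ℝ)) * b' ^ p ≤ ((p : ℝ) + 1) * B ^ (p + 1) := by
            have hmul := mul_le_mul_of_nonneg_left hkB hP1.le
            have hone : ((p : ℝ) + 1) * ((p : ℝ) * (b' - B) * b' ^ p) = (p : ℝ) * b' ^ p := by
              rw [hb'def]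
              field_simp
              ring
            rw [hone] at hmul
            have hBB : B * B ^ p = B ^ (p + 1) := by rw [pow_succ]; ring
            nlinarith [hmul, hBB]
          rw [← hmp, le_div_iff₀ (by positivity : (0 : ℝ) < b' ^ p)]
          have hmtB : m = t * B := by rw [htdef]; field_simp
          have hBne : B ≠ 0 := ne_of_gt hBkpos
          have htne : t ≠ 0 := ne_of_gt htpos
          have hP1ne : ((p : ℝ) + 1) ≠ 0 := ne_of_gt hP1
          have heq1 : (t ^ p - (p : ℝ) / (((p : ℝ) + 1) * m) * t ^ (p + 1)) * b' ^ p
              = ((((p : ℝ) + 1) * B - (p : ℝ)) * b' ^ p) * (t ^ p / (((p : ℝ) + 1) * B)) := by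
            rw [hmtB]
            field_simp
            ring
          have heq2 : m ^ p = (((p : ℝ) + 1) * B ^ (p + 1)) * (t ^ p / (((p : ℝ) + 1) * B)) := by
            rw [hmtB]
            field_simp
            ring
          rw [heq1, heq2]
          exact mul_le_mul_of_nonneg_right hpoly (by positivity)
        linarith [hstep1, hstep2, hstep3]
  intro k hk
  have hBk1 := hBge1 k hk
  have hBkpos : (0 : ℝ) < ((p : ℝ) + 1) ^ ((1 : ℝ) / (p : ℝ)) + ((k : ℝ) - 1) / ((p : ℝ) + 1) := by
    linarith
  have hc := claim k hk
  have hkpos : (0 : ℝ) < (k : ℝ) := by exact_mod_cast hk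
  constructor
  · rw [Real.rpow_neg hBkpos.le, Real.rpow_natCast, ← div_eq_mul_inv]
    exact hc
  · have h7 : (k : ℝ) / ((p : ℝ) + 1)
        ≤ ((p : ℝ) + 1) ^ ((1 : ℝ) / (p : ℝ)) + ((k : ℝ) - 1) / ((p : ℝ) + 1) := by
      have h8 : (1 : ℝ) / ((p : ℝ) + 1) ≤ 1 := by
        rw [div_le_one hP1]; linarith
      have : (k : ℝ) / ((p : ℝ) + 1) = ((k : ℝ) - 1) / ((p : ℝ) + 1) + 1 / ((p : ℝ) + 1) := by
        ring
      rw [this]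
      linarith [hroot1]
    have hq : (0 : ℝ) < (k : ℝ) / ((p : ℝ) + 1) := by positivity
    have hpow : ((k : ℝ) / ((p : ℝ) + 1)) ^ p
        ≤ (((p : ℝ) + 1) ^ ((1 : ℝ) / (p : ℝ)) + ((k : ℝ) - 1) / ((p : ℝ) + 1)) ^ p :=
      pow_le_pow_left₀ hq.le h7 p
    have hfrac : ν / (((p : ℝ) + 1) ^ ((1 : ℝ) / (p : ℝ)) + ((k : ℝ) - 1) / ((p : ℝ) + 1)) ^ p
        ≤ ν / ((k : ℝ) / ((p : ℝ) + 1)) ^ p :=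
      div_le_div_of_nonneg_left hν.le (by positivity) hpow
    have hrw : ν / ((k : ℝ) / ((p : ℝ) + 1)) ^ p = ν * (((p : ℝ) + 1) / (k : ℝ)) ^ p := by
      rw [show ((p : ℝ) + 1) / (k : ℝ) = ((k : ℝ) / ((p : ℝ) + 1))⁻¹ by rw [inv_div],
        inv_pow, ← div_eq_mul_inv]
    linarith [hc, hfrac, hrw.le]
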